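/- Let 1 < p < ∞, 1 ≤ q ≤ s, and let w be a weight on ℝⁿ. Then w ∈ A_{s/q} ∩ RH_{(p/s)'} if and only if w^{(p/s)'} ∈ A_{(p/s)'(s/q − 1) + 1}, where for 1 < r < ∞, [w]_{A_r} = sup_Q ⟨w⟩_{Q,1} ⟨w^{1−r'}⟩_{Q,1}^{r−1} < ∞ defines the Muckenhoupt class and [w]_{RH_r} = sup_Q ⟨w⟩_{Q,1}^{−1} ⟨w⟩_{Q,r} < ∞ defines the reverse Hölder class (suprema over cubes Q, ⟨w⟩_{Q,r} := (|Q|^{-1}∫_Q w^r)^{1/r}). -/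

import Mathlib

open MeasureTheory Set
open scoped ENNReal

/-- The half-open cube with corner `c` and side length `l` in `ℝⁿ`. -/
def wCube (n : ℕ) (c : Fin n → ℝ) (l : ℝ) : Set (Fin n → ℝ) :=
  Set.univ.pi fun i => Set.Ico (c i) (c i + l)

/-- `⟨w⟩_{Q,r} = (|Q|⁻¹ ∫_Q w^r)^{1/r}` over the cube with corner `c`, side `l`. -/
noncomputable def wAvg (n : ℕ) (w : (Fin n → ℝ) → ℝ≥0∞) (r : ℝ)
    (c : Fin n → ℝ) (l : ℝ) : ℝ≥0∞ :=
  ((volume (wCube n c l))⁻¹ * ∫⁻ x in wCube n c l, (w x) ^ r) ^ (1/r)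


lemma wCube_vol (n : ℕ) (c : Fin n → ℝ) (l : ℝ) :
    volume (wCube n c l) = ENNReal.ofReal l ^ n := by
  rw [wCube, volume_pi_pi]
  simp [Real.volume_Ico]

lemma wCube_vol_ne_zero (n : ℕ) (c : Fin n → ℝ) {l : ℝ} (hl : 0 < l) :
    volume (wCube n c l) ≠ 0 := by
  rw [wCube_vol]
  exact pow_ne_zero _ (by simpa using (ENNReal.ofReal_pos.2 hl).ne')

lemma wCube_vol_ne_top (n : ℕ) (c : Fin n → ℝ) (l : ℝ) :
    volume (wCube n c l) ≠ ⊤ := by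
  rw [wCube_vol]
  exact ENNReal.pow_ne_top ENNReal.ofReal_ne_top

lemma wAvg_one (n : ℕ) (w : (Fin n → ℝ) → ℝ≥0∞) (c : Fin n → ℝ) (l : ℝ) :
    wAvg n w 1 c l = (volume (wCube n c l))⁻¹ * ∫⁻ x in wCube n c l, w x := by
  simp [wAvg]

/-- Jensen: `⟨w⟩_{Q,1} ≤ ⟨w⟩_{Q,r}` for `r > 1`. -/
lemma avg_one_le_avg (n : ℕ) (w : (Fin n → ℝ) → ℝ≥0∞) (hwm : Measurable w)
    {r : ℝ} (hr : 1 < r) (c : Fin n → ℝ) {l : ℝ} (hl : 0 < l) :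
    wAvg n w 1 c l ≤ wAvg n w r c l := by
  set Q := wCube n c l
  set V := volume Q with hV
  have hV0 : V ≠ 0 := wCube_vol_ne_zero n c hl
  have hVT : V ≠ ⊤ := wCube_vol_ne_top n c l
  have hconj : r.HolderConjugate r.conjExponent := Real.HolderConjugate.conjExponent hr
  have H := ENNReal.lintegral_mul_le_Lp_mul_Lq (volume.restrict Q) hconj
    hwm.aemeasurable (aemeasurable_const (b := (1 : ℝ≥0∞)))
  simp only [Pi.mul_apply, mul_one, ENNReal.one_rpow, lintegral_const,
    Measure.restrict_apply MeasurableSet.univ, univ_inter, one_mul] at H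
  rw [← hV] at H
  -- H : ∫⁻ w ≤ (∫⁻ w^r)^(1/r) * V^(1/r')
  rw [wAvg_one]
  rw [wAvg, ENNReal.mul_rpow_of_nonneg _ _ (by positivity : (0:ℝ) ≤ 1/r),
    ENNReal.inv_rpow]
  calc V⁻¹ * ∫⁻ x in Q, w x
      ≤ V⁻¹ * ((∫⁻ x in Q, w x ^ r) ^ (1/r) * V ^ (1 / r.conjExponent)) :=
        mul_le_mul_right H _
    _ = (V⁻¹ * V ^ (1 / r.conjExponent)) * (∫⁻ x in Q, w x ^ r) ^ (1/r) := by ring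
    _ = (V ^ (1/r))⁻¹ * (∫⁻ x in Q, w x ^ r) ^ (1/r) := by
        congr 1
        rw [← ENNReal.rpow_neg_one V, ← ENNReal.rpow_add _ _ hV0 hVT,
          ← ENNReal.rpow_neg]
        congr 1
        have := hconj.inv_add_inv_eq_one
        rw [Real.conjExponent] at *
        field_simp
        linarith [hconj.inv_add_inv_eq_one]

/-- Hölder: `1 ≤ ⟨w⟩_{Q,1} ⟨w^{1-t'}⟩_{Q,1}^{t-1}` for `t > 1`. -/
lemma one_le_avg_mul (n : ℕ) (w : (Fin n → ℝ) → ℝ≥0∞) (hwm : Measurable w)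
    (hw : ∀ᵐ x ∂(volume : Measure (Fin n → ℝ)), 0 < w x ∧ w x < ⊤)
    {t : ℝ} (ht : 1 < t) (c : Fin n → ℝ) {l : ℝ} (hl : 0 < l) :
    1 ≤ wAvg n w 1 c l * (wAvg n (fun x => (w x) ^ (1 - t/(t-1))) 1 c l) ^ (t - 1) := by
  set Q := wCube n c l
  set V := volume Q with hV
  have hV0 : V ≠ 0 := wCube_vol_ne_zero n c hl
  have hVT : V ≠ ⊤ := wCube_vol_ne_top n c l
  have ht0 : (0:ℝ) < t := lt_trans one_pos ht
  have ht1 : t - 1 ≠ 0 := by linarith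
  have hconj : t.HolderConjugate t.conjExponent := Real.HolderConjugate.conjExponent ht
  have htc : t.conjExponent = t/(t-1) := rfl
  have H := ENNReal.lintegral_mul_le_Lp_mul_Lq (volume.restrict Q) hconj
    ((hwm.pow_const (1/t)).aemeasurable) ((hwm.pow_const (-(1/t))).aemeasurable)
  have e1 : ∀ᵐ x ∂(volume.restrict Q),
      ((fun x => w x ^ (1/t)) * fun x => w x ^ (-(1/t))) x = 1 := by
    filter_upwards [ae_restrict_of_ae hw] with x hx
    simp only [Pi.mul_apply]
    rw [← ENNReal.rpow_add _ _ hx.1.ne' hx.2.ne]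
    simp
  rw [lintegral_congr_ae e1, lintegral_one, Measure.restrict_apply MeasurableSet.univ,
    univ_inter, ← hV] at H
  have e2 : ∀ x, (w x ^ (1/t)) ^ t = w x := by
    intro x
    rw [← ENNReal.rpow_mul]
    rw [one_div, inv_mul_cancel₀ ht0.ne', ENNReal.rpow_one]
  have e3 : ∀ x, (w x ^ (-(1/t))) ^ t.conjExponent = w x ^ (1 - t/(t-1)) := by
    intro x
    rw [← ENNReal.rpow_mul, htc]
    congr 1
    field_simp
    ring
  simp only [e2, e3] at H
  -- H : V ≤ (∫⁻ w)^(1/t) * (∫⁻ σ)^(1/t')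
  set A := ∫⁻ x in Q, w x
  set B := ∫⁻ x in Q, w x ^ (1 - t/(t-1))
  have key : (1:ℝ≥0∞) ≤ (V⁻¹ * A) ^ (1/t) * (V⁻¹ * B) ^ (1/t.conjExponent) := by
    have : (V⁻¹ * A) ^ (1/t) * (V⁻¹ * B) ^ (1/t.conjExponent)
        = V⁻¹ * (A ^ (1/t) * B ^ (1/t.conjExponent)) := by
      rw [ENNReal.mul_rpow_of_nonneg _ _ (by positivity : (0:ℝ) ≤ 1/t),
        ENNReal.mul_rpow_of_nonneg _ _ hconj.symm.one_div_nonneg,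
        ENNReal.inv_rpow, ENNReal.inv_rpow,
        ← ENNReal.rpow_neg, ← ENNReal.rpow_neg,
        show V ^ (-(1/t)) * A ^ (1/t) * (V ^ (-(1/t.conjExponent)) * B ^ (1/t.conjExponent))
          = (V ^ (-(1/t)) * V ^ (-(1/t.conjExponent))) * (A ^ (1/t) * B ^ (1/t.conjExponent))
          from by ring,
        ← ENNReal.rpow_add _ _ hV0 hVT]
      congr 2
      rw [show -(1/t) + -(1/t.conjExponent) = -(1/t + 1/t.conjExponent) from by ring,
        one_div, one_div, hconj.inv_add_inv_eq_one]
      exact ENNReal.rpow_neg_one V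
    rw [this]
    calc (1:ℝ≥0∞) = V⁻¹ * V := (ENNReal.inv_mul_cancel hV0 hVT).symm
      _ ≤ V⁻¹ * (A ^ (1/t) * B ^ (1/t.conjExponent)) := mul_le_mul_right H _
  have := ENNReal.rpow_le_rpow key ht0.le
  rw [ENNReal.one_rpow, ENNReal.mul_rpow_of_nonneg _ _ ht0.le,
    ← ENNReal.rpow_mul, ← ENNReal.rpow_mul,
    one_div_mul_cancel ht0.ne',
    show 1/t.conjExponent * t = t - 1 from by rw [htc]; field_simp,
    ENNReal.rpow_one] at this
  rw [wAvg_one, wAvg_one]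
  exact this

/-- The Muckenhoupt condition `w ∈ A_r` (for `1 < r`):
`sup_Q ⟨w⟩_{Q,1} ⟨w^{1−r'}⟩_{Q,1}^{r−1} < ∞` with `r' = r/(r-1)`. -/
def MuckenhouptA (n : ℕ) (r : ℝ) (w : (Fin n → ℝ) → ℝ≥0∞) : Prop :=
  ∃ C : ℝ≥0∞, C ≠ ⊤ ∧ ∀ (c : Fin n → ℝ) (l : ℝ), 0 < l →
    wAvg n w 1 c l * (wAvg n (fun x => (w x) ^ (1 - r/(r-1))) 1 c l) ^ (r - 1) ≤ C

/-- The reverse Hölder condition `w ∈ RH_r`: `sup_Q ⟨w⟩_{Q,1}⁻¹ ⟨w⟩_{Q,r} < ∞`,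
i.e. `⟨w⟩_{Q,r} ≤ C ⟨w⟩_{Q,1}` uniformly over cubes. -/
def ReverseHolder (n : ℕ) (r : ℝ) (w : (Fin n → ℝ) → ℝ≥0∞) : Prop :=
  ∃ C : ℝ≥0∞, C ≠ ⊤ ∧ ∀ (c : Fin n → ℝ) (l : ℝ), 0 < l →
    wAvg n w r c l ≤ C * wAvg n w 1 c l

/-- Characterization `w ∈ A_{s/q} ∩ RH_{(p/s)'} ↔ w^{(p/s)'} ∈ A_{(p/s)'(s/q−1)+1}`. -/
theorem stmt4 (n : ℕ) (hn : 1 ≤ n) (p q s : ℝ) (hp : 1 < p) (hq : 1 ≤ q)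
    (hqs : q < s) (hsp : s < p)
    (w : (Fin n → ℝ) → ℝ≥0∞) (hwm : Measurable w)
    (hw : ∀ᵐ x ∂volume, 0 < w x ∧ w x < ⊤) :
    (MuckenhouptA n (s/q) w ∧ ReverseHolder n ((p/s)/((p/s) - 1)) w) ↔
      MuckenhouptA n (((p/s)/((p/s) - 1)) * (s/q - 1) + 1)
        (fun x => (w x) ^ ((p/s)/((p/s) - 1))) := by
  have hq0 : (0:ℝ) < q := lt_of_lt_of_le one_pos hq
  have hs0 : (0:ℝ) < s := hq0.trans hqs
  set t := s / q with htdef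
  set r := (p/s) / ((p/s) - 1) with hrdef
  have ht : 1 < t := (one_lt_div hq0).2 hqs
  have hps : 1 < p / s := (one_lt_div hs0).2 hsp
  have hrconj : (p/s).HolderConjugate r := Real.HolderConjugate.conjExponent hps
  have hr : 1 < r := hrconj.symm.lt
  have hr0 : (0:ℝ) < r := one_pos.trans hr
  have ht1 : (0:ℝ) < t - 1 := by linarith
  have hτ2 : r * (t - 1) + 1 - 1 = (t - 1) * r := by ring
  have e1 : r * (1 - (r * (t-1) + 1) / (r * (t-1) + 1 - 1)) = 1 - t / (t-1) := by
    have h1 : r * (t - 1) ≠ 0 := by positivity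
    field_simp
    ring
  have hfun : (fun x => (w x ^ r) ^ (1 - (r * (t-1) + 1) / (r * (t-1) + 1 - 1)))
      = fun x => w x ^ (1 - t / (t-1)) := by
    funext x
    rw [← ENNReal.rpow_mul, e1]
  have havg : ∀ (c : Fin n → ℝ) (l : ℝ),
      wAvg n (fun x => w x ^ r) 1 c l = (wAvg n w r c l) ^ r := by
    intro c l
    rw [wAvg_one, wAvg, ← ENNReal.rpow_mul, one_div, inv_mul_cancel₀ hr0.ne',
      ENNReal.rpow_one]
  constructor
  · rintro ⟨⟨C1, hC1, hA⟩, ⟨C2, hC2, hRH⟩⟩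
    refine ⟨(C2 * C1) ^ r,
      (ENNReal.rpow_lt_top_of_nonneg hr0.le (ENNReal.mul_ne_top hC2 hC1)).ne, ?_⟩
    intro c l hl
    simp only [havg c l, hfun]
    rw [hτ2, ENNReal.rpow_mul, ← ENNReal.mul_rpow_of_nonneg _ _ hr0.le]
    refine ENNReal.rpow_le_rpow ?_ hr0.le
    calc wAvg n w r c l * (wAvg n (fun x => w x ^ (1 - t/(t-1))) 1 c l) ^ (t-1)
        ≤ (C2 * wAvg n w 1 c l) * (wAvg n (fun x => w x ^ (1 - t/(t-1))) 1 c l) ^ (t-1) :=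
          mul_le_mul_left (hRH c l hl) _
      _ = C2 * (wAvg n w 1 c l * (wAvg n (fun x => w x ^ (1 - t/(t-1))) 1 c l) ^ (t-1)) := by
          ring
      _ ≤ C2 * C1 := mul_le_mul_right (hA c l hl) _
  · rintro ⟨C, hC, hAC⟩
    have key : ∀ (c : Fin n → ℝ) (l : ℝ), 0 < l →
        wAvg n w r c l * (wAvg n (fun x => w x ^ (1 - t/(t-1))) 1 c l) ^ (t-1) ≤ C ^ (1/r) := by
      intro c l hl
      have h1 := hAC c l hl
      simp only [havg c l, hfun] at h1
      rw [hτ2, ENNReal.rpow_mul, ← ENNReal.mul_rpow_of_nonneg _ _ hr0.le] at h1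
      have h2 := ENNReal.rpow_le_rpow h1 (by positivity : (0:ℝ) ≤ r⁻¹)
      rw [one_div]
      rwa [ENNReal.rpow_rpow_inv hr0.ne'] at h2
    have hCfin : C ^ (1/r) ≠ ⊤ :=
      (ENNReal.rpow_lt_top_of_nonneg (by positivity) hC).ne
    refine ⟨⟨C ^ (1/r), hCfin, fun c l hl => ?_⟩, ⟨C ^ (1/r), hCfin, fun c l hl => ?_⟩⟩
    · exact le_trans (mul_le_mul_left (avg_one_le_avg n w hwm hr c hl) _) (key c l hl)
    · calc wAvg n w r c l = wAvg n w r c l * 1 := (mul_one _).symm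
        _ ≤ wAvg n w r c l * (wAvg n w 1 c l *
            (wAvg n (fun x => w x ^ (1 - t/(t-1))) 1 c l) ^ (t-1)) :=
          mul_le_mul_right (one_le_avg_mul n w hwm hw ht c hl) _
        _ = (wAvg n w r c l * (wAvg n (fun x => w x ^ (1 - t/(t-1))) 1 c l) ^ (t-1)) *
            wAvg n w 1 c l := by ring
        _ ≤ C ^ (1/r) * wAvg n w 1 c l := mul_le_mul_left (key c l hl) _
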